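/- Let P ∈ H_n be a rank-k orthogonal projection with 1 ≤ k < n. Then the real span of S(P) = { B ∈ H_n : tr(BP) = w_k(B) } equals H(Ran P) ⊕ H(Ker P) (Hermitian matrices block-diagonal with respect to ℂ^n = Ran P ⊕ Ker P), and hence has real dimension k² + (n−k)². -/

import Mathlib

open Matrix

/-- `P` is an orthogonal projection of rank `k`. -/
def IsProjOfRank {m : Type*} [Fintype m] [DecidableEq m]
    (P : Matrix m m ℂ) (k : ℕ) : Prop :=
  P * P = P ∧ Pᴴ = P ∧ P.rank = k

/-- The `k`-numerical range `W_k(A) = { tr (A P) : P an orthogonal projection of rank k }`. -/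
def WK {m : Type*} [Fintype m] [DecidableEq m] (k : ℕ) (A : Matrix m m ℂ) : Set ℂ :=
  {z | ∃ P : Matrix m m ℂ, IsProjOfRank P k ∧ z = (A * P).trace}

/-- The `k`-numerical radius `w_k(A) = max { |tr (A P)| : P a rank-k orthogonal projection }`. -/
noncomputable def wk {m : Type*} [Fintype m] [DecidableEq m] (k : ℕ) (A : Matrix m m ℂ) : ℝ :=
  sSup {r : ℝ | ∃ P : Matrix m m ℂ, IsProjOfRank P k ∧ r = ‖(A * P).trace‖}

/-- `A` and `B` are parallel with respect to the `k`-numerical radius. -/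
noncomputable def ParallelWk {m : Type*} [Fintype m] [DecidableEq m]
    (k : ℕ) (A B : Matrix m m ℂ) : Prop :=
  ∃ μ : ℂ, ‖μ‖ = 1 ∧ wk k (A + μ • B) = wk k A + wk k B

/-- Sum of the `k` largest eigenvalues of a Hermitian matrix (`0` if not Hermitian). -/
noncomputable def sumKLargest {m : Type*} [Fintype m] [DecidableEq m]
    (k : ℕ) (A : Matrix m m ℂ) : ℝ :=
  if h : A.IsHermitian then
    sSup {r : ℝ | ∃ s : Finset m, s.card = k ∧ r = ∑ i ∈ s, h.eigenvalues i}
  else 0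

/-- Sum of the `k` smallest eigenvalues of a Hermitian matrix (`0` if not Hermitian). -/
noncomputable def sumKSmallest {m : Type*} [Fintype m] [DecidableEq m]
    (k : ℕ) (A : Matrix m m ℂ) : ℝ :=
  if h : A.IsHermitian then
    sInf {r : ℝ | ∃ s : Finset m, s.card = k ∧ r = ∑ i ∈ s, h.eigenvalues i}
  else 0

namespace Stmt15

variable {n : ℕ}

local notation "M" => Matrix (Fin n) (Fin n) ℂ

lemma conjTranspose_mul_self_diag (X : M) (i : Fin n) :
    (Xᴴ * X) i i = ((∑ j, Complex.normSq (X j i) : ℝ) : ℂ) := by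
  simp only [Matrix.mul_apply, conjTranspose_apply]
  push_cast
  refine Finset.sum_congr rfl fun j _ => ?_
  simp [Complex.star_def, Complex.normSq_eq_conj_mul_self]

lemma trace_conjTranspose_mul_self (X : M) :
    (Xᴴ * X).trace = ((∑ i, ∑ j, Complex.normSq (X j i) : ℝ) : ℂ) := by
  rw [Matrix.trace]
  push_cast
  exact Finset.sum_congr rfl fun i _ => by
    rw [Matrix.diag_apply, conjTranspose_mul_self_diag]; push_cast; rfl

/-- eigenvalues of a hermitian idempotent are 0 or 1 -/
lemma proj_eigen01 {P : M} (hidem : P * P = P) (hH : P.IsHermitian) (i : Fin n) :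
    hH.eigenvalues i = 0 ∨ hH.eigenvalues i = 1 := by
  set V : M := (hH.eigenvectorUnitary : M) with hV
  have h2 : V * star V = 1 := Matrix.mem_unitaryGroup_iff.mp hH.eigenvectorUnitary.2
  have hdiag : star V * P * V = diagonal (RCLike.ofReal ∘ hH.eigenvalues) :=
    by have := hH.conjStarAlgAut_star_eigenvectorUnitary; simp only [Unitary.conjStarAlgAut_star_apply] at this; exact this
  have hsq : (diagonal (RCLike.ofReal ∘ hH.eigenvalues) : M) * diagonal (RCLike.ofReal ∘ hH.eigenvalues) = diagonal (RCLike.ofReal ∘ hH.eigenvalues) := by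
    rw [← hdiag]
    calc (star V * P * V) * (star V * P * V) = star V * (P * (V * star V) * P) * V := by
          noncomm_ring
    _ = star V * P * V := by rw [h2]; noncomm_ring [hidem]
  rw [diagonal_mul_diagonal] at hsq
  have := congrFun (congrFun hsq i) i
  simp only [diagonal_apply_eq, Pi.mul_apply, Function.comp_apply] at this
  have h3 : (hH.eigenvalues i) * (hH.eigenvalues i) = hH.eigenvalues i := by
    exact_mod_cast this
  have h4 : hH.eigenvalues i * (hH.eigenvalues i - 1) = 0 := by ring_nf; linarith [h3]
  rcases mul_eq_zero.mp h4 with h | h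
  · exact Or.inl h
  · exact Or.inr (by linarith)

lemma card_eigen_one {P : M} {k : ℕ} (hP : IsProjOfRank P k) (hH : P.IsHermitian) :
    (Finset.univ.filter fun i => hH.eigenvalues i ≠ 0).card = k := by
  rw [← Fintype.card_subtype, ← hH.rank_eq_card_non_zero_eigs]; exact hP.2.2

lemma trace_proj' {P : M} {k : ℕ} (hP : IsProjOfRank P k) : P.trace = (k : ℂ) := by
  have hH : P.IsHermitian := hP.2.1
  set V : M := (hH.eigenvectorUnitary : M) with hV
  have h2 : V * star V = 1 := Matrix.mem_unitaryGroup_iff.mp hH.eigenvectorUnitary.2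
  have hdiag : star V * P * V = diagonal (RCLike.ofReal ∘ hH.eigenvalues) :=
    by have := hH.conjStarAlgAut_star_eigenvectorUnitary; simp only [Unitary.conjStarAlgAut_star_apply] at this; exact this
  have htr : P.trace = ∑ i, (hH.eigenvalues i : ℂ) := by
    have h4 : P.trace = (star V * P * V).trace := by
      rw [Matrix.trace_mul_cycle]
      rw [show V * star V * P = P by rw [h2, one_mul]]
    rw [h4, hdiag, Matrix.trace_diagonal]
    rfl
  rw [htr]
  have h5 : ∑ i, (hH.eigenvalues i : ℂ) = ∑ i, (if hH.eigenvalues i ≠ 0 then (1:ℂ) else 0) := by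
    refine Finset.sum_congr rfl fun i _ => ?_
    rcases proj_eigen01 hP.1 hH i with h | h <;> simp [h]
  rw [h5, Finset.sum_ite, Finset.sum_const, Finset.sum_const, ← card_eigen_one hP hH]
  simp


/-- projection is selfadjoint-factorized -/
lemma proj_eq_sq {Q : M} {k : ℕ} (hQ : IsProjOfRank Q k) : Q = Qᴴ * Q := by
  rw [hQ.2.1, hQ.1]

lemma proj_diag (Q : M) {k : ℕ} (hQ : IsProjOfRank Q k) (i : Fin n) :
    Q i i = ((∑ j, Complex.normSq (Q j i) : ℝ) : ℂ) := by
  conv_lhs => rw [proj_eq_sq hQ]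
  exact conjTranspose_mul_self_diag Q i

lemma proj_diag_le_one (Q : M) {k : ℕ} (hQ : IsProjOfRank Q k) (i : Fin n) :
    (∑ j, Complex.normSq (Q j i) : ℝ) ≤ 1 := by
  set t := (∑ j, Complex.normSq (Q j i) : ℝ) with ht
  have h1 : Complex.normSq (Q i i) = t ^ 2 := by
    rw [proj_diag Q hQ i, ← ht, Complex.normSq_ofReal]; ring
  have h2 : t ^ 2 ≤ t := by
    rw [← h1, ht]
    exact Finset.single_le_sum (f := fun j => Complex.normSq (Q j i)) (fun j _ => Complex.normSq_nonneg _) (Finset.mem_univ i)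
  nlinarith

lemma proj_entry_le_one (Q : M) {k : ℕ} (hQ : IsProjOfRank Q k) (i j : Fin n) :
    ‖Q i j‖ ≤ 1 := by
  have h1 : Complex.normSq (Q i j) ≤ ∑ l, Complex.normSq (Q l j) :=
    Finset.single_le_sum (f := fun l => Complex.normSq (Q l j)) (fun l _ => Complex.normSq_nonneg _) (Finset.mem_univ i)
  have h2 := proj_diag_le_one Q hQ j
  rw [← Complex.sq_norm] at h1
  nlinarith [norm_nonneg (Q i j)]

lemma wk_bddAbove (k : ℕ) (A : M) :
    (∑ i, ∑ j, ‖A i j‖) ∈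
      upperBounds {r : ℝ | ∃ Q : M, IsProjOfRank Q k ∧ r = ‖(A * Q).trace‖} := by
  rintro r ⟨Q, hQ, rfl⟩
  calc ‖(A * Q).trace‖
      ≤ ∑ i, ‖(A * Q) i i‖ := by
        rw [Matrix.trace]; exact norm_sum_le _ _
    _ ≤ ∑ i, ∑ j, ‖A i j‖ := by
        refine Finset.sum_le_sum fun i _ => ?_
        rw [Matrix.mul_apply]
        calc ‖∑ j, A i j * Q j i‖ ≤ ∑ j, ‖A i j * Q j i‖ :=
              norm_sum_le _ _
          _ ≤ ∑ j, ‖A i j‖ := by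
              refine Finset.sum_le_sum fun j _ => ?_
              rw [norm_mul]
              calc ‖A i j‖ * ‖Q j i‖
                  ≤ ‖A i j‖ * 1 :=
                    mul_le_mul_of_nonneg_left (proj_entry_le_one Q hQ j i)
                      (norm_nonneg _)
                _ = ‖A i j‖ := mul_one _

lemma wk_eq {k : ℕ} (A : M) (v : ℝ) (Q₀ : M) (h₀ : IsProjOfRank Q₀ k)
    (hv : ‖(A * Q₀).trace‖ = v)
    (hub : ∀ Q : M, IsProjOfRank Q k → ‖(A * Q).trace‖ ≤ v) :
    wk k A = v := by
  apply le_antisymm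
  · exact csSup_le ⟨_, Q₀, h₀, rfl⟩ (by rintro r ⟨Q, hQ, rfl⟩; exact hub Q hQ)
  · exact le_csSup ⟨v, by rintro r ⟨Q, hQ, rfl⟩; exact hub Q hQ⟩ ⟨Q₀, h₀, hv.symm⟩

lemma wk_ub {k : ℕ} (A : M) (Q : M) (hQ : IsProjOfRank Q k) :
    ‖(A * Q).trace‖ ≤ wk k A :=
  le_csSup ⟨_, wk_bddAbove k A⟩ ⟨Q, hQ, rfl⟩


/-- trace of product of two projections is real, in [0, k] -/
lemma trace_proj_mul_proj {P Q : M} {k l : ℕ} (hP : IsProjOfRank P k) (hQ : IsProjOfRank Q l) :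
    ∃ s : ℝ, (P * Q).trace = (s : ℂ) ∧ 0 ≤ s ∧ s ≤ k := by
  obtain ⟨hPi, hPh, hPr⟩ := hP
  obtain ⟨hQi, hQh, hQr⟩ := hQ
  have e1 : (Q * P)ᴴ * (Q * P) = P * Q * P := by
    rw [conjTranspose_mul, hPh, hQh]
    calc P * Q * (Q * P) = P * (Q * Q) * P := by noncomm_ring
      _ = P * Q * P := by rw [hQi]
  have e2 : ((1 - Q) * P)ᴴ * ((1 - Q) * P) = P * (1 - Q) * P := by
    have h1 : (1 - Q)ᴴ = 1 - Q := by
      rw [conjTranspose_sub, hQh, conjTranspose_one]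
    rw [conjTranspose_mul, hPh, h1]
    calc P * (1 - Q) * ((1 - Q) * P) = P * ((1 - Q) * (1 - Q)) * P := by noncomm_ring
      _ = P * (1 - Q) * P := by
          rw [show (1 - Q) * (1 - Q) = 1 - Q by rw [sub_mul, mul_sub, mul_sub, hQi]; noncomm_ring]
  have t1 : (P * Q * P).trace = (P * Q).trace := by
    rw [Matrix.trace_mul_cycle, show P * P * Q = P * Q by rw [hPi]]
  have t2 : (P * (1 - Q) * P).trace = (k : ℂ) - (P * Q).trace := by
    rw [Matrix.trace_mul_cycle, show P * P * (1 - Q) = P * (1 - Q) by rw [hPi],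
      mul_sub, mul_one, trace_sub, trace_proj' ⟨hPi, hPh, hPr⟩]
  set s := (∑ i, ∑ j, Complex.normSq ((Q * P) j i) : ℝ) with hs
  have hstr : (P * Q).trace = (s : ℂ) := by
    rw [← t1, ← e1, trace_conjTranspose_mul_self]
  have hs0 : 0 ≤ s := Finset.sum_nonneg fun i _ =>
    Finset.sum_nonneg fun j _ => Complex.normSq_nonneg _
  set s2 := (∑ i, ∑ j, Complex.normSq (((1 - Q) * P) j i) : ℝ) with hs2
  have hs2tr : ((k : ℝ) - s : ℝ) = s2 := by
    have : (P * (1 - Q) * P).trace = (s2 : ℂ) := by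
      rw [← e2, trace_conjTranspose_mul_self]
    rw [t2, hstr] at this
    exact_mod_cast this
  have hs20 : 0 ≤ s2 := Finset.sum_nonneg fun i _ =>
    Finset.sum_nonneg fun j _ => Complex.normSq_nonneg _
  exact ⟨s, hstr, hs0, by linarith⟩

lemma trace_herm (B : M) (hB : B.IsHermitian) :
    B.trace = ((∑ i, hB.eigenvalues i : ℝ) : ℂ) := by
  set V : M := (hB.eigenvectorUnitary : M) with hV
  have h2 : V * star V = 1 := Matrix.mem_unitaryGroup_iff.mp hB.eigenvectorUnitary.2
  have hdiag : star V * B * V = diagonal (RCLike.ofReal ∘ hB.eigenvalues) :=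
    by have := hB.conjStarAlgAut_star_eigenvectorUnitary; simp only [Unitary.conjStarAlgAut_star_apply] at this; exact this
  have h4 : B.trace = (star V * B * V).trace := by
    rw [Matrix.trace_mul_cycle, show V * star V * B = B by rw [h2, one_mul]]
  rw [h4, hdiag, Matrix.trace_diagonal]
  push_cast
  rfl

/-- key bound: for Hermitian B and any W, tr(B WᴴW) is real with
|tr(B WᴴW)| ≤ (∑ |eigenvalues|) * tr(WᴴW). -/
lemma trace_herm_mul_factor (B : M) (hB : B.IsHermitian) (W : M) :
    ∃ t s : ℝ, 0 ≤ s ∧ (B * (Wᴴ * W)).trace = (t : ℂ) ∧ (Wᴴ * W).trace = (s : ℂ) ∧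
      |t| ≤ (∑ i, |hB.eigenvalues i|) * s := by
  set lam := hB.eigenvalues with hlam
  set V : M := (hB.eigenvectorUnitary : M) with hV
  have h1 : star V * V = 1 := Matrix.mem_unitaryGroup_iff'.mp hB.eigenvectorUnitary.2
  have h2 : V * star V = 1 := Matrix.mem_unitaryGroup_iff.mp hB.eigenvectorUnitary.2
  set D : M := diagonal (RCLike.ofReal ∘ lam) with hD
  have hspec : B = V * D * star V := hB.spectral_theorem
  set G : M := (W * V)ᴴ * (W * V) with hG
  set g : Fin n → ℝ := fun i => ∑ j, Complex.normSq ((W * V) j i) with hg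
  have hGdiag : ∀ i, G i i = (g i : ℂ) := fun i => conjTranspose_mul_self_diag (W * V) i
  have hg0 : ∀ i, 0 ≤ g i := fun i =>
    Finset.sum_nonneg fun j _ => Complex.normSq_nonneg _
  set s := ∑ i, g i with hs
  have hs0 : 0 ≤ s := Finset.sum_nonneg fun i _ => hg0 i
  have hGW : G = star V * (Wᴴ * W) * V := by
    rw [hG, conjTranspose_mul, star_eq_conjTranspose]; noncomm_ring
  have htrG : G.trace = (Wᴴ * W).trace := by
    rw [hGW, Matrix.trace_mul_cycle, show V * star V * (Wᴴ * W) = Wᴴ * W by rw [h2, one_mul]]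
  have htrG2 : G.trace = (s : ℂ) := by
    rw [hG, trace_conjTranspose_mul_self]
  have hsWW : (Wᴴ * W).trace = (s : ℂ) := by rw [← htrG, htrG2]
  have e1 : B * (Wᴴ * W) = V * (D * G * star V) := by
    rw [hspec, hGW]
    calc V * D * star V * (Wᴴ * W) = V * (D * ((star V * (Wᴴ * W) * V) * star V)) := by
          rw [show (star V * (Wᴴ * W) * V) * star V = star V * (Wᴴ * W) * (V * star V) by noncomm_ring,
            h2, mul_one]
          noncomm_ring
    _ = V * (D * (star V * (Wᴴ * W) * V) * star V) := by noncomm_ring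
  have e2 : (B * (Wᴴ * W)).trace = (D * G).trace := by
    rw [e1, Matrix.trace_mul_comm,
      show D * G * star V * V = D * G by rw [mul_assoc, h1, mul_one]]
  set t := ∑ i, lam i * g i with ht
  have e3 : (D * G).trace = (t : ℂ) := by
    rw [ht]
    push_cast
    rw [Matrix.trace]
    refine Finset.sum_congr rfl fun i _ => ?_
    rw [Matrix.diag_apply, Matrix.diagonal_mul, hGdiag i]
    rfl
  refine ⟨t, s, hs0, by rw [e2, e3], hsWW, ?_⟩
  calc |t| ≤ ∑ i, |lam i * g i| := Finset.abs_sum_le_sum_abs _ _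
    _ = ∑ i, |lam i| * g i := by
        refine Finset.sum_congr rfl fun i _ => ?_
        rw [abs_mul, abs_of_nonneg (hg0 i)]
    _ ≤ ∑ i, (∑ l, |lam l|) * g i := by
        refine Finset.sum_le_sum fun i _ => ?_
        exact mul_le_mul_of_nonneg_right
          (Finset.single_le_sum (f := fun l => |lam l|) (fun l _ => abs_nonneg _)
            (Finset.mem_univ i)) (hg0 i)
    _ = (∑ i, |lam i|) * s := by rw [← Finset.mul_sum]


/-- unitary conjugation preserves rank-k projections -/
lemma proj_conj {P : M} {k : ℕ} (hP : IsProjOfRank P k) {V : M}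
    (h1 : star V * V = 1) (h2 : V * star V = 1) :
    IsProjOfRank (star V * P * V) k := by
  obtain ⟨hi, hh, hr⟩ := hP
  refine ⟨?_, ?_, ?_⟩
  · calc star V * P * V * (star V * P * V)
        = star V * (P * (V * star V) * P) * V := by noncomm_ring
      _ = star V * P * V := by rw [h2]; noncomm_ring [hi]
  · simp only [star_eq_conjTranspose, conjTranspose_mul, conjTranspose_conjTranspose, hh,
      mul_assoc]
  · have hdV : IsUnit (V.det) := by
      apply IsUnit.of_mul_eq_one (star V).det
      rw [← det_mul, h2, det_one]
    have hdsV : IsUnit ((star V).det) := by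
      apply IsUnit.of_mul_eq_one V.det
      rw [← det_mul, h1, det_one]
    rw [Matrix.rank_mul_eq_left_of_isUnit_det V _ hdV]
    rw [show star V * P = star V * P by rfl]
    rw [Matrix.rank_mul_eq_right_of_isUnit_det (star V) P hdsV]
    exact hr

lemma proj_diag_indicator (S : Finset (Fin n)) :
    IsProjOfRank (diagonal fun i => if i ∈ S then (1:ℂ) else 0) S.card := by
  refine ⟨?_, ?_, ?_⟩
  · rw [diagonal_mul_diagonal]
    apply congrArg Matrix.diagonal
    funext i
    by_cases hi : i ∈ S <;> simp [hi]
  · rw [diagonal_conjTranspose]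
    apply congrArg Matrix.diagonal
    funext i
    by_cases hi : i ∈ S <;> simp [hi]
  · rw [Matrix.rank_diagonal, Fintype.card_subtype]
    congr 1
    ext i
    by_cases hi : i ∈ S <;> simp [hi]

lemma S_subset_comm {k : ℕ} (hk : 1 ≤ k) (hkn : k ≤ n) {P : M} (hP : IsProjOfRank P k)
    {B : M} (hB : B.IsHermitian) (htr : (B * P).trace = ((wk k B : ℝ) : ℂ)) :
    P * B = B * P := by
  set lam := hB.eigenvalues with hlam
  set V : M := (hB.eigenvectorUnitary : M) with hV
  have h1 : star V * V = 1 := Matrix.mem_unitaryGroup_iff'.mp hB.eigenvectorUnitary.2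
  have h2 : V * star V = 1 := Matrix.mem_unitaryGroup_iff.mp hB.eigenvectorUnitary.2
  set D : M := diagonal (RCLike.ofReal ∘ lam) with hD
  have hspec : B = V * D * star V := hB.spectral_theorem
  set Mx : M := star V * P * V with hMx
  have hMproj : IsProjOfRank Mx k := proj_conj hP h1 h2
  have hMherm : Mxᴴ = Mx := hMproj.2.1
  have hMfact : Mx = Mxᴴ * Mx := by rw [hMherm, hMproj.1]
  set t : Fin n → ℝ := fun i => ∑ j, Complex.normSq (Mx j i) with htdef
  have hMdiag : ∀ i, Mx i i = (t i : ℂ) := by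
    intro i
    conv_lhs => rw [hMfact]
    exact conjTranspose_mul_self_diag Mx i
  have ht0 : ∀ i, 0 ≤ t i := fun i =>
    Finset.sum_nonneg fun j _ => Complex.normSq_nonneg _
  have ht1 : ∀ i, t i ≤ 1 := by
    intro i
    have hA : Complex.normSq (Mx i i) = t i ^ 2 := by
      rw [hMdiag i, Complex.normSq_ofReal]; ring
    have hBl : Complex.normSq (Mx i i) ≤ t i :=
      Finset.single_le_sum (f := fun j => Complex.normSq (Mx j i))
        (fun j _ => Complex.normSq_nonneg _) (Finset.mem_univ i)
    nlinarith [ht0 i]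
  -- trace identities
  have e1 : B * P = V * (D * Mx * star V) := by
    rw [hspec, hMx]
    calc V * D * star V * P
        = V * D * (star V * P * (V * star V)) := by rw [h2]; noncomm_ring
      _ = V * (D * (star V * P * V) * star V) := by noncomm_ring
  have e2 : (B * P).trace = (D * Mx).trace := by
    rw [e1, Matrix.trace_mul_comm,
      show D * Mx * star V * V = D * Mx * (star V * V) by noncomm_ring, h1, mul_one]
  have htrace : (B * P).trace = ((∑ i, lam i * t i : ℝ) : ℂ) := by
    rw [e2]
    push_cast
    rw [Matrix.trace]
    refine Finset.sum_congr rfl fun i _ => ?_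
    rw [Matrix.diag_apply, Matrix.diagonal_mul, hMdiag i]
    rfl
  have hsum_t : ∑ i, t i = (k : ℝ) := by
    have htrM : Mx.trace = ((k : ℕ) : ℂ) := trace_proj' hMproj
    have htrM2 : Mx.trace = ((∑ i, t i : ℝ) : ℂ) := by
      rw [Matrix.trace]
      push_cast
      exact Finset.sum_congr rfl fun i _ => by rw [Matrix.diag_apply, hMdiag i]
    rw [htrM2] at htrM
    exact_mod_cast htrM
  have hwk : wk k B = ∑ i, lam i * t i := by
    rw [htr] at htrace
    exact_mod_cast htrace
  -- upper bound: any k-set of eigenvalues is dominated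
  have hub : ∀ S : Finset (Fin n), S.card = k → ∑ i ∈ S, lam i ≤ ∑ i, lam i * t i := by
    intro S hS
    set E : M := diagonal (fun i => if i ∈ S then (1:ℂ) else 0) with hE
    have hEproj : IsProjOfRank E k := hS ▸ proj_diag_indicator S
    have hQproj : IsProjOfRank (V * E * star V) k := by
      have := proj_conj hEproj (V := star V) (by rw [star_star]; exact h2)
        (by rw [star_star]; exact h1)
      rwa [star_star] at this
    have eQ : B * (V * E * star V) = V * (D * E) * star V := by
      rw [hspec]
      calc V * D * star V * (V * E * star V)
          = V * D * ((star V * V) * E * star V) := by noncomm_ring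
        _ = V * (D * E) * star V := by rw [h1]; noncomm_ring
    have htrQ : (B * (V * E * star V)).trace = ((∑ i ∈ S, lam i : ℝ) : ℂ) := by
      rw [eQ, Matrix.trace_mul_cycle,
        show star V * V * (D * E) = D * E by rw [h1, one_mul]]
      rw [Matrix.trace]
      have hde : ∀ i, (D * E).diag i = (if i ∈ S then ((lam i : ℝ) : ℂ) else 0) := by
        intro i
        rw [Matrix.diag_apply, Matrix.mul_diagonal, hD, diagonal_apply_eq]
        by_cases hi : i ∈ S <;> simp [hi]
      rw [Finset.sum_congr rfl fun i _ => hde i, ← Finset.sum_filter,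
        Finset.filter_mem_eq_inter, Finset.univ_inter]
      push_cast
      rfl
    calc ∑ i ∈ S, lam i ≤ |∑ i ∈ S, lam i| := le_abs_self _
      _ = ‖(B * (V * E * star V)).trace‖ := by
          rw [htrQ, Complex.norm_real, Real.norm_eq_abs]
      _ ≤ wk k B := wk_ub B _ hQproj
      _ = ∑ i, lam i * t i := hwk
  -- choose a maximizing k-subset S
  obtain ⟨S, hSmem, hSmax⟩ := Finset.exists_max_image
    ((Finset.univ : Finset (Fin n)).powersetCard k) (fun s => ∑ i ∈ s, lam i)
    (Finset.powersetCard_nonempty.mpr (by simpa using hkn))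
  have hScard : S.card = k := (Finset.mem_powersetCard.mp hSmem).2
  have hSne : S.Nonempty := Finset.card_pos.mp (by omega)
  have hswap : ∀ i ∈ S, ∀ j, j ∉ S → lam j ≤ lam i := by
    intro i hi j hj
    have hjerase : j ∉ S.erase i := fun h => hj (Finset.mem_of_mem_erase h)
    have hmem : insert j (S.erase i) ∈ (Finset.univ : Finset (Fin n)).powersetCard k := by
      rw [Finset.mem_powersetCard]
      refine ⟨Finset.subset_univ _, ?_⟩
      rw [Finset.card_insert_of_notMem hjerase, Finset.card_erase_of_mem hi]
      omega
    have hle := hSmax _ hmem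
    rw [Finset.sum_insert hjerase, Finset.sum_erase_eq_sub hi] at hle
    linarith
  obtain ⟨i₀, hi₀S, hi₀min⟩ := Finset.exists_min_image S lam hSne
  set c := lam i₀ with hc
  have hcS : ∀ i ∈ S, c ≤ lam i := hi₀min
  have hcNS : ∀ j, j ∉ S → lam j ≤ c := fun j hj => hswap i₀ hi₀S j hj
  -- the slack function
  set f : Fin n → ℝ := fun i => if i ∈ S then (lam i - c) * (1 - t i) else (c - lam i) * t i
    with hf
  have hf0 : ∀ i, 0 ≤ f i := by
    intro i
    by_cases hi : i ∈ S
    · simp only [hf, hi, if_pos]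
      exact mul_nonneg (by linarith [hcS i hi]) (by linarith [ht1 i])
    · simp only [hf, hi, if_neg, if_false]
      exact mul_nonneg (by linarith [hcNS i hi]) (ht0 i)
  have hfsum : ∑ i, f i = ∑ i ∈ S, lam i - ∑ i, lam i * t i := by
    have hfg : ∀ i, f i = (if i ∈ S then lam i else 0) - lam i * t i + c * t i
        - c * (if i ∈ S then 1 else 0) := by
      intro i
      by_cases hi : i ∈ S <;> simp only [hf, hi, if_pos, if_neg, if_false] <;> ring
    have hg2 : ∑ i, (if i ∈ S then (1:ℝ) else 0) = (k : ℝ) := by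
      rw [Finset.sum_boole, Finset.filter_mem_eq_inter, Finset.univ_inter, hScard]
    have hg1 : ∑ i, (if i ∈ S then lam i else 0) = ∑ i ∈ S, lam i := by
      rw [← Finset.sum_filter, Finset.filter_mem_eq_inter, Finset.univ_inter]
    rw [Finset.sum_congr rfl fun i _ => hfg i, Finset.sum_sub_distrib,
      Finset.sum_add_distrib, Finset.sum_sub_distrib,
      ← Finset.mul_sum, ← Finset.mul_sum, hsum_t, hg1, hg2]
    ring
  have hfzero : ∀ i, f i = 0 := by
    have hsle : ∑ i, f i ≤ 0 := by rw [hfsum]; linarith [hub S hScard]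
    have : ∑ i, f i = 0 := le_antisymm hsle (Finset.sum_nonneg fun i _ => hf0 i)
    intro i
    exact (Finset.sum_eq_zero_iff_of_nonneg (fun i _ => hf0 i)).mp this i (Finset.mem_univ i)
  have hT1 : ∀ i, c < lam i → t i = 1 := by
    intro i hci
    have hiS : i ∈ S := by
      by_contra hiS
      linarith [hcNS i hiS]
    have := hfzero i
    simp only [hf, hiS, if_pos] at this
    rcases mul_eq_zero.mp this with h | h
    · linarith
    · linarith
  have hT0 : ∀ i, lam i < c → t i = 0 := by
    intro i hci
    have hiS : i ∉ S := fun hiS => by linarith [hcS i hiS]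
    have := hfzero i
    simp only [hf, hiS, if_neg, if_false] at this
    rcases mul_eq_zero.mp this with h | h
    · linarith
    · exact h
  -- column structure
  have hcol1 : ∀ i, t i = 1 → ∀ j, j ≠ i → Mx j i = 0 := by
    intro i hti j hji
    have hsum : ∑ j ∈ Finset.univ.erase i, Complex.normSq (Mx j i) = 0 := by
      have := Finset.sum_erase_add Finset.univ (fun j => Complex.normSq (Mx j i))
        (Finset.mem_univ i)
      have hnormii : Complex.normSq (Mx i i) = 1 := by
        rw [hMdiag i, hti, Complex.normSq_ofReal]; norm_num
      have htot : ∑ j, Complex.normSq (Mx j i) = 1 := hti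
      linarith [this.symm ▸ htot]
    have := (Finset.sum_eq_zero_iff_of_nonneg
      (fun j _ => Complex.normSq_nonneg (Mx j i))).mp hsum j
      (Finset.mem_erase.mpr ⟨hji, Finset.mem_univ j⟩)
    exact Complex.normSq_eq_zero.mp this
  have hcol0 : ∀ i, t i = 0 → ∀ j, Mx j i = 0 := by
    intro i hti j
    have htot : ∑ j, Complex.normSq (Mx j i) = 0 := hti
    have := (Finset.sum_eq_zero_iff_of_nonneg
      (fun j _ => Complex.normSq_nonneg (Mx j i))).mp htot j (Finset.mem_univ j)
    exact Complex.normSq_eq_zero.mp this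
  have hherm_entry : ∀ i j, Mx i j = star (Mx j i) := by
    intro i j
    conv_lhs => rw [← hMherm]
    rfl
  have hMzero : ∀ i j, lam i ≠ lam j → Mx i j = 0 := by
    intro i j hij
    rcases lt_trichotomy (lam i) c with h | h | h
    · rw [hherm_entry i j, hcol0 i (hT0 i h) j, star_zero]
    · rcases lt_trichotomy (lam j) c with h' | h' | h'
      · exact hcol0 j (hT0 j h') i
      · exact absurd (h.trans h'.symm) hij
      · exact hcol1 j (hT1 j h') i (fun hh => hij (by rw [hh]))
    · have hji : j ≠ i := fun hh => hij (by rw [hh])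
      rw [hherm_entry i j, hcol1 i (hT1 i h) j hji, star_zero]
  have hMD : Mx * D = D * Mx := by
    ext i j
    rw [Matrix.mul_diagonal, Matrix.diagonal_mul]
    by_cases hij : lam i = lam j
    · simp only [hD, Function.comp_apply]
      rw [show lam j = lam i from hij.symm]
      ring
    · rw [hMzero i j hij]
      ring
  have hPV : V * Mx * star V = P := by
    rw [hMx]
    calc V * (star V * P * V) * star V = (V * star V) * P * (V * star V) := by noncomm_ring
      _ = P := by rw [h2]; noncomm_ring
  calc P * B = (V * Mx * star V) * (V * D * star V) := by rw [hPV, ← hspec]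
    _ = V * (Mx * ((star V * V) * D)) * star V := by noncomm_ring
    _ = V * (Mx * D) * star V := by rw [h1]; noncomm_ring
    _ = V * (D * Mx) * star V := by rw [hMD]
    _ = (V * D * star V) * (V * Mx * star V) := by
        rw [show (V * D * star V) * (V * Mx * star V) = V * (D * ((star V * V) * Mx)) * star V
          by noncomm_ring, h1]
        noncomm_ring
    _ = B * P := by rw [hPV, ← hspec]


lemma P_mem_S {k : ℕ} {P : M} (hP : IsProjOfRank P k) :
    (P * P).trace = ((wk k P : ℝ) : ℂ) := by
  have hub : ∀ Q : M, IsProjOfRank Q k → ‖(P * Q).trace‖ ≤ (k : ℝ) := by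
    intro Q hQ
    obtain ⟨s, hs, hs0, hsk⟩ := trace_proj_mul_proj hP hQ
    rw [hs, Complex.norm_real, Real.norm_eq_abs, abs_of_nonneg hs0]
    exact hsk
  have hv : ‖(P * P).trace‖ = (k : ℝ) := by
    rw [hP.1, trace_proj' hP]
    simp
  rw [wk_eq P (k : ℝ) P hP hv hub, hP.1, trace_proj' hP]
  simp

/-- perturbation inside the range: B = P B P -/
lemma mem_S_inner {k : ℕ} {P : M} (hP : IsProjOfRank P k) (hk : 1 ≤ k)
    {B : M} (hB : B.IsHermitian) (hBP : B = P * B * P) :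
    ∃ ε : ℝ, 0 < ε ∧ (P + (ε : ℂ) • B).IsHermitian ∧
      ((P + (ε : ℂ) • B) * P).trace = ((wk k (P + (ε : ℂ) • B) : ℝ) : ℂ) := by
  set c := ∑ i, |hB.eigenvalues i| with hc
  have hc0 : 0 ≤ c := Finset.sum_nonneg fun i _ => abs_nonneg _
  set τ := ∑ i, hB.eigenvalues i with hτ
  have hτc : |τ| ≤ c := Finset.abs_sum_le_sum_abs _ _
  have hk1 : (1:ℝ) ≤ (k:ℝ) := by exact_mod_cast hk
  set ε := (k : ℝ) / ((k + 2) * (c + 1)) with hε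
  have hε0 : 0 < ε := by
    apply div_pos (by positivity)
    positivity
  have hεc1 : ε * c ≤ 1 := by
    rw [hε, div_mul_eq_mul_div, div_le_one (by positivity)]
    nlinarith [hc0, hk1]
  have hεck : ε * c * (k + 2) ≤ k := by
    rw [hε]
    rw [div_mul_eq_mul_div, div_mul_eq_mul_div, div_le_iff₀ (by positivity)]
    nlinarith [hc0, Nat.cast_nonneg (α := ℝ) k]
  set A : M := P + (ε : ℂ) • B with hA
  have hAh : A.IsHermitian := by
    show Aᴴ = A
    rw [hA, conjTranspose_add, hP.2.1, conjTranspose_smul, hB, Complex.star_def,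
      Complex.conj_ofReal]
  have hBPl : B * P = B := by rw [hBP]; rw [show P * B * P * P = P * B * (P * P) by noncomm_ring, hP.1]
  have htrB : B.trace = (τ : ℂ) := trace_herm B hB
  have htrAP : (A * P).trace = (((k : ℝ) + ε * τ : ℝ) : ℂ) := by
    rw [hA, add_mul, smul_mul_assoc, hBPl, hP.1, trace_add, trace_smul, smul_eq_mul, trace_proj' hP, htrB]
    push_cast
    ring
  have hval0 : (0:ℝ) ≤ (k : ℝ) + ε * τ := by
    have h1 : ε * |τ| ≤ ε * c := mul_le_mul_of_nonneg_left hτc (le_of_lt hε0)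
    have h2 : (1:ℝ) ≤ (k:ℝ) := Nat.one_le_cast.mpr hk
    have := neg_abs_le τ
    nlinarith
  have hub : ∀ Q : M, IsProjOfRank Q k →
      ‖(A * Q).trace‖ ≤ (k : ℝ) + ε * τ := by
    intro Q hQ
    obtain ⟨s₁, hs₁, hs₁0, hs₁k⟩ := trace_proj_mul_proj hP hQ
    -- W₀ := (1 - Q) * P,  W₀ᴴ W₀ = P (1-Q) P
    set W₀ : M := (1 - Q) * P with hW₀
    have hW₀f : W₀ᴴ * W₀ = P * (1 - Q) * P := by
      rw [hW₀, conjTranspose_mul, hP.2.1, conjTranspose_sub, conjTranspose_one, hQ.2.1]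
      calc P * (1 - Q) * ((1 - Q) * P) = P * ((1 - Q) * (1 - Q)) * P := by noncomm_ring
        _ = P * (1 - Q) * P := by
            rw [show (1 - Q) * (1 - Q) = 1 - Q by rw [sub_mul, mul_sub, mul_sub, hQ.1]; noncomm_ring]
    obtain ⟨tt, s, hs0, htt, hstr, httb⟩ := trace_herm_mul_factor B hB W₀
    have hsval : s = (k : ℝ) - s₁ := by
      have e1 : (W₀ᴴ * W₀).trace = ((k:ℝ) : ℂ) - ((s₁ : ℝ) : ℂ) := by
        rw [hW₀f, Matrix.trace_mul_cycle,
          show P * P * (1 - Q) = P * (1 - Q) by rw [hP.1],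
          mul_sub, mul_one, trace_sub, trace_proj' hP, hs₁]
        push_cast; ring
      rw [hstr] at e1
      have : (s : ℂ) = (((k:ℝ) - s₁ : ℝ) : ℂ) := by rw [e1]; push_cast; ring
      exact_mod_cast this
    -- trace of B * Q
    have htrBQ : (B * Q).trace = ((τ - tt : ℝ) : ℂ) := by
      have e3 : (B * Q).trace = (B * (P * Q * P)).trace := by
        conv_lhs => rw [hBP]
        rw [Matrix.trace_mul_cycle (P * B) P Q, Matrix.trace_mul_cycle Q (P * B) P,
          show P * Q * (P * B) = (P * Q * P) * B by noncomm_ring, Matrix.trace_mul_comm]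
      have e4 : B * (P * Q * P) = B * P - B * (W₀ᴴ * W₀) := by
        rw [hW₀f]
        noncomm_ring [hP.1]
      rw [e3, e4, trace_sub, hBPl, htrB, htt]
      push_cast; ring
    have htrAQ : (A * Q).trace = ((s₁ + ε * (τ - tt) : ℝ) : ℂ) := by
      rw [hA, add_mul, smul_mul_assoc, trace_add, trace_smul, smul_eq_mul, hs₁, htrBQ]
      push_cast; ring
    rw [htrAQ, Complex.norm_real, Real.norm_eq_abs]
    rw [abs_le]
    have htt' : |tt| ≤ c * ((k:ℝ) - s₁) := by rw [← hsval]; exact httb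
    have h1 := abs_le.mp htt'
    have h2 := abs_le.mp hτc
    have m1 : ε * tt ≤ ε * (c * ((k:ℝ) - s₁)) := mul_le_mul_of_nonneg_left h1.2 hε0.le
    have m2 : ε * (-(c * ((k:ℝ) - s₁))) ≤ ε * tt := mul_le_mul_of_nonneg_left h1.1 hε0.le
    have m3 : ε * τ ≤ ε * c := mul_le_mul_of_nonneg_left h2.2 hε0.le
    have m4 : ε * (-c) ≤ ε * τ := mul_le_mul_of_nonneg_left h2.1 hε0.le
    have m5 : 0 ≤ ε * c * s₁ := by positivity
    have m6 : 0 ≤ (1 - ε * c) * ((k:ℝ) - s₁) := mul_nonneg (by linarith) (by linarith)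
    constructor
    · nlinarith [m2, m4, m5, hεck]
    · nlinarith [m1, m6]
  have hv : ‖(A * P).trace‖ = (k : ℝ) + ε * τ := by
    rw [htrAP, Complex.norm_real, Real.norm_eq_abs, abs_of_nonneg hval0]
  refine ⟨ε, hε0, hAh, ?_⟩
  rw [wk_eq A _ P hP hv hub, htrAP]

/-- perturbation outside the range: B = (1-P) B (1-P) -/
lemma mem_S_outer {k : ℕ} {P : M} (hP : IsProjOfRank P k)
    {B : M} (hB : B.IsHermitian) (hBP : B = (1 - P) * B * (1 - P)) :
    ∃ ε : ℝ, 0 < ε ∧ (P + (ε : ℂ) • B).IsHermitian ∧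
      ((P + (ε : ℂ) • B) * P).trace = ((wk k (P + (ε : ℂ) • B) : ℝ) : ℂ) := by
  set c := ∑ i, |hB.eigenvalues i| with hc
  have hc0 : 0 ≤ c := Finset.sum_nonneg fun i _ => abs_nonneg _
  set ε := 1 / (c + 1) with hε
  have hε0 : 0 < ε := by positivity
  have hεc1 : ε * c ≤ 1 := by
    rw [hε, div_mul_eq_mul_div, one_mul, div_le_one (by positivity)]
    linarith
  set A : M := P + (ε : ℂ) • B with hA
  have hAh : A.IsHermitian := by
    show Aᴴ = A
    rw [hA, conjTranspose_add, hP.2.1, conjTranspose_smul, hB, Complex.star_def,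
      Complex.conj_ofReal]
  have h1P : (1 - P) * P = 0 := by
    rw [sub_mul, one_mul, hP.1, sub_self]
  have hBPl : B * P = 0 := by
    rw [hBP, mul_assoc, h1P, mul_zero]
  have htrAP : (A * P).trace = (((k:ℕ):ℝ) : ℂ) := by
    rw [hA, add_mul, smul_mul_assoc, hBPl, hP.1, smul_zero, add_zero, trace_proj' hP]
    push_cast; ring
  have hub : ∀ Q : M, IsProjOfRank Q k →
      ‖(A * Q).trace‖ ≤ ((k:ℕ):ℝ) := by
    intro Q hQ
    obtain ⟨s₁, hs₁, hs₁0, hs₁k⟩ := trace_proj_mul_proj hP hQ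
    set W₀ : M := Q * (1 - P) with hW₀
    have h1Q : (1 - P)ᴴ = 1 - P := by
      rw [conjTranspose_sub, conjTranspose_one, hP.2.1]
    have hW₀f : W₀ᴴ * W₀ = (1 - P) * Q * (1 - P) := by
      rw [hW₀, conjTranspose_mul, h1Q, hQ.2.1]
      calc (1 - P) * Q * (Q * (1 - P)) = (1 - P) * (Q * Q) * (1 - P) := by noncomm_ring
        _ = (1 - P) * Q * (1 - P) := by rw [hQ.1]
    obtain ⟨tt, s, hs0, htt, hstr, httb⟩ := trace_herm_mul_factor B hB W₀
    have hsval : s = ((k:ℕ):ℝ) - s₁ := by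
      have e1 : (W₀ᴴ * W₀).trace = (((k:ℕ):ℝ) : ℂ) - ((s₁ : ℝ) : ℂ) := by
        rw [hW₀f, Matrix.trace_mul_cycle,
          show (1 - P) * (1 - P) * Q = (1 - P) * Q by
            rw [show (1 - P) * (1 - P) = 1 - P by rw [sub_mul, mul_sub, mul_sub, hP.1]; noncomm_ring],
          sub_mul, one_mul, trace_sub, trace_proj' hQ, hs₁]
        push_cast; ring
      rw [hstr] at e1
      have : (s : ℂ) = ((((k:ℕ):ℝ) - s₁ : ℝ) : ℂ) := by rw [e1]; push_cast; ring
      exact_mod_cast this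
    have htrBQ : (B * Q).trace = ((tt : ℝ) : ℂ) := by
      have e3 : (B * Q).trace = (B * ((1 - P) * Q * (1 - P))).trace := by
        conv_lhs => rw [hBP]
        rw [Matrix.trace_mul_cycle ((1 - P) * B) (1 - P) Q,
          Matrix.trace_mul_cycle Q ((1 - P) * B) (1 - P),
          show (1 - P) * Q * ((1 - P) * B) = ((1 - P) * Q * (1 - P)) * B by noncomm_ring,
          Matrix.trace_mul_comm]
      rw [e3, ← hW₀f, htt]
    have htrAQ : (A * Q).trace = ((s₁ + ε * tt : ℝ) : ℂ) := by
      rw [hA, add_mul, smul_mul_assoc, trace_add, trace_smul, smul_eq_mul, hs₁, htrBQ]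
      push_cast; ring
    rw [htrAQ, Complex.norm_real, Real.norm_eq_abs, abs_le]
    have htt' : |tt| ≤ c * (((k:ℕ):ℝ) - s₁) := by rw [← hsval]; exact httb
    have h1 := abs_le.mp htt'
    have m1 : ε * tt ≤ ε * (c * (((k:ℕ):ℝ) - s₁)) := mul_le_mul_of_nonneg_left h1.2 hε0.le
    have m2 : ε * (-(c * (((k:ℕ):ℝ) - s₁))) ≤ ε * tt := mul_le_mul_of_nonneg_left h1.1 hε0.le
    have m6 : 0 ≤ (1 - ε * c) * (((k:ℕ):ℝ) - s₁) := mul_nonneg (by linarith) (by linarith)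
    constructor
    · nlinarith [m2, m6]
    · nlinarith [m1, m6]
  have hv : ‖(A * P).trace‖ = ((k:ℕ):ℝ) := by
    rw [htrAP, Complex.norm_real, Real.norm_eq_abs, abs_of_nonneg (by positivity)]
  refine ⟨ε, hε0, hAh, ?_⟩
  rw [wk_eq A _ P hP hv hub, htrAP]


/-- Hermitian matrices commuting with P, as an ℝ-submodule. -/
noncomputable def commSub (P : M) : Submodule ℝ (Matrix (Fin n) (Fin n) ℂ) where
  carrier := {B : M | B.IsHermitian ∧ P * B = B * P}
  add_mem' := fun ha hb => ⟨ha.1.add hb.1, by rw [mul_add, add_mul, ha.2, hb.2]⟩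
  zero_mem' := ⟨isHermitian_zero, by simp⟩
  smul_mem' := fun r B hB => by
    refine ⟨?_, ?_⟩
    · show (r • B)ᴴ = r • B
      rw [conjTranspose_smul, star_trivial, hB.1.eq]
    · rw [mul_smul_comm, smul_mul_assoc, hB.2]

lemma real_smul_eq (r : ℝ) (B : M) : (r : ℂ) • B = r • B := by
  ext i j
  simp [Matrix.smul_apply, Complex.real_smul]

lemma span_S_eq {k : ℕ} (hk : 1 ≤ k) (hkn : k ≤ n) {P : M} (hP : IsProjOfRank P k) :
    Submodule.span ℝ {B : M | B.IsHermitian ∧ (B * P).trace = ((wk k B : ℝ) : ℂ)}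
      = commSub P := by
  apply le_antisymm
  · rw [Submodule.span_le]
    rintro B ⟨hB, htr⟩
    exact ⟨hB, S_subset_comm hk hkn hP hB htr⟩
  · rintro B ⟨hB, hcomm⟩
    set Sp := {B : M | B.IsHermitian ∧ (B * P).trace = ((wk k B : ℝ) : ℂ)} with hSp
    have hP_mem : P ∈ Submodule.span ℝ Sp :=
      Submodule.subset_span ⟨hP.2.1, P_mem_S hP⟩
    have key : ∀ C : M, C.IsHermitian →
        (∃ ε : ℝ, 0 < ε ∧ (P + (ε : ℂ) • C).IsHermitian ∧
          ((P + (ε : ℂ) • C) * P).trace = ((wk k (P + (ε : ℂ) • C) : ℝ) : ℂ)) →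
        C ∈ Submodule.span ℝ Sp := by
      rintro C hC ⟨ε, hε, hAh, hAtr⟩
      have hA_mem : P + (ε : ℂ) • C ∈ Submodule.span ℝ Sp :=
        Submodule.subset_span ⟨hAh, hAtr⟩
      have hdiff : (ε : ℂ) • C ∈ Submodule.span ℝ Sp := by
        have := Submodule.sub_mem _ hA_mem hP_mem
        simpa using this
      rw [real_smul_eq] at hdiff
      have := Submodule.smul_mem _ (ε⁻¹) hdiff
      rwa [smul_smul, inv_mul_cancel₀ hε.ne', one_smul] at this
    -- decompose B
    have hPBP : P * B * P = B * P := by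
      rw [hcomm, mul_assoc, hP.1]
    have hB1h : (P * B * P).IsHermitian := by
      show (P * B * P)ᴴ = P * B * P
      rw [conjTranspose_mul, conjTranspose_mul, hP.2.1, hB.eq]
      noncomm_ring
    have hB2h : ((1 - P) * B * (1 - P)).IsHermitian := by
      have h1Q : (1 - P)ᴴ = 1 - P := by rw [conjTranspose_sub, conjTranspose_one, hP.2.1]
      show _ᴴ = _
      rw [conjTranspose_mul, conjTranspose_mul, h1Q, hB.eq]
      noncomm_ring
    have hB1fix : P * B * P = P * (P * B * P) * P := by
      rw [show P * (P * B * P) * P = (P * P) * B * (P * P) by noncomm_ring, hP.1]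
    have hB2fix : (1 - P) * B * (1 - P) = (1 - P) * ((1 - P) * B * (1 - P)) * (1 - P) := by
      have h2 : (1 - P) * (1 - P) = 1 - P := by
        rw [sub_mul, mul_sub, mul_sub, hP.1]; noncomm_ring
      rw [show (1 - P) * ((1 - P) * B * (1 - P)) * (1 - P)
        = ((1 - P) * (1 - P)) * B * ((1 - P) * (1 - P)) by noncomm_ring, h2]
    have hB1mem : P * B * P ∈ Submodule.span ℝ Sp :=
      key _ hB1h (mem_S_inner hP hk hB1h hB1fix)
    have hB2mem : (1 - P) * B * (1 - P) ∈ Submodule.span ℝ Sp :=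
      key _ hB2h (mem_S_outer hP hB2h hB2fix)
    have hsplit : B = P * B * P + (1 - P) * B * (1 - P) := by
      rw [show (1 - P) * B * (1 - P) = B - P * B - B * P + P * B * P by noncomm_ring,
        hPBP, hcomm]
      abel
    rw [hsplit]
    exact Submodule.add_mem _ hB1mem hB2mem


/-- Hermitian matrices supported where the pattern matches. -/
noncomputable def diagSub (p : Fin n → ℝ) : Submodule ℝ (Matrix (Fin n) (Fin n) ℂ) where
  carrier := {C : M | C.IsHermitian ∧ ∀ i j, p i ≠ p j → C i j = 0}
  add_mem' := fun ha hb => ⟨ha.1.add hb.1, fun i j hij => by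
    rw [Matrix.add_apply, ha.2 i j hij, hb.2 i j hij, add_zero]⟩
  zero_mem' := ⟨isHermitian_zero, fun i j _ => rfl⟩
  smul_mem' := fun r C hC => by
    refine ⟨?_, fun i j hij => ?_⟩
    · show (r • C)ᴴ = r • C
      rw [conjTranspose_smul, star_trivial, hC.1.eq]
    · rw [Matrix.smul_apply, hC.2 i j hij, smul_zero]

lemma mem_diagSub {p : Fin n → ℝ} {C : M} :
    C ∈ diagSub p ↔ C.IsHermitian ∧ ∀ i j, p i ≠ p j → C i j = 0 := Iff.rfl

lemma diag_comm_iff (p : Fin n → ℝ) (C : M) :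
    (diagonal (RCLike.ofReal ∘ p) * C = C * diagonal (RCLike.ofReal ∘ p)) ↔
      (∀ i j, p i ≠ p j → C i j = 0) := by
  constructor
  · intro h i j hij
    have := congrFun (congrFun h i) j
    rw [Matrix.diagonal_mul, Matrix.mul_diagonal] at this
    have hne : ((p i : ℂ)) ≠ ((p j : ℂ)) := by
      simpa using fun hh => hij (by exact_mod_cast hh)
    have : ((p i : ℂ) - (p j : ℂ)) * C i j = 0 := by
      rw [sub_mul]
      simp only [Function.comp_apply] at this
      rw [show (p i : ℂ) * C i j = C i j * (p j : ℂ) from by exact_mod_cast this]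
      ring
    rcases mul_eq_zero.mp this with h' | h'
    · exact absurd (by linear_combination h' : (p i : ℂ) = (p j : ℂ)) hne
    · exact h'
  · intro h
    ext i j
    rw [Matrix.diagonal_mul, Matrix.mul_diagonal]
    by_cases hij : p i = p j
    · simp only [Function.comp_apply, hij]
      ring
    · rw [h i j hij]
      ring

/-- conjugation by a unitary as an ℝ-linear equivalence of matrices -/
noncomputable def conjEquiv (V : M) (h1 : star V * V = 1) (h2 : V * star V = 1) :
    Matrix (Fin n) (Fin n) ℂ ≃ₗ[ℝ] Matrix (Fin n) (Fin n) ℂ where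
  toFun B := star V * B * V
  map_add' B C := by noncomm_ring
  map_smul' r B := by
    simp only [RingHom.id_apply]
    rw [mul_smul_comm, smul_mul_assoc]
  invFun C := V * C * star V
  left_inv B := by
    calc V * (star V * B * V) * star V = (V * star V) * B * (V * star V) := by noncomm_ring
      _ = B := by rw [h2]; noncomm_ring
  right_inv C := by
    calc star V * (V * C * star V) * V = (star V * V) * C * (star V * V) := by noncomm_ring
      _ = C := by rw [h1]; noncomm_ring

lemma map_commSub {k : ℕ} {P : M} (hP : IsProjOfRank P k) (hH : P.IsHermitian) :
    Submodule.map (conjEquiv (hH.eigenvectorUnitary : M)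
        (Matrix.mem_unitaryGroup_iff'.mp hH.eigenvectorUnitary.2)
        (Matrix.mem_unitaryGroup_iff.mp hH.eigenvectorUnitary.2)).toLinearMap
      (commSub P) = diagSub hH.eigenvalues := by
  set V : M := (hH.eigenvectorUnitary : M) with hV
  have h1 : star V * V = 1 := Matrix.mem_unitaryGroup_iff'.mp hH.eigenvectorUnitary.2
  have h2 : V * star V = 1 := Matrix.mem_unitaryGroup_iff.mp hH.eigenvectorUnitary.2
  have hdiag : star V * P * V = diagonal (RCLike.ofReal ∘ hH.eigenvalues) :=
    by have := hH.conjStarAlgAut_star_eigenvectorUnitary; simp only [Unitary.conjStarAlgAut_star_apply] at this; exact this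
  have hPV : P = V * diagonal (RCLike.ofReal ∘ hH.eigenvalues) * star V := by
    rw [← hdiag]
    calc P = (V * star V) * P * (V * star V) := by rw [h2]; noncomm_ring
      _ = V * (star V * P * V) * star V := by noncomm_ring
  apply le_antisymm
  · rintro C ⟨B, ⟨hBh, hBc⟩, rfl⟩
    constructor
    · show (star V * B * V)ᴴ = star V * B * V
      simp only [star_eq_conjTranspose, conjTranspose_mul, conjTranspose_conjTranspose, hBh.eq,
        mul_assoc]
    · rw [← diag_comm_iff, ← hdiag]
      show (star V * P * V) * (star V * B * V) = (star V * B * V) * (star V * P * V)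
      calc (star V * P * V) * (star V * B * V) = star V * (P * (V * star V) * B) * V := by
            noncomm_ring
        _ = star V * (P * B) * V := by rw [h2]; noncomm_ring
        _ = star V * (B * P) * V := by rw [hBc]
        _ = star V * (B * (V * star V) * P) * V := by rw [h2]; noncomm_ring
        _ = (star V * B * V) * (star V * P * V) := by noncomm_ring
  · intro C hC
    obtain ⟨hCh, hCs⟩ := hC
    refine ⟨V * C * star V, ⟨?_, ?_⟩, ?_⟩
    · show (V * C * star V)ᴴ = V * C * star V
      simp only [star_eq_conjTranspose, conjTranspose_mul, conjTranspose_conjTranspose, hCh.eq,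
        mul_assoc]
    · have hDC := (diag_comm_iff _ C).mpr hCs
      rw [hPV]
      calc V * diagonal (RCLike.ofReal ∘ hH.eigenvalues) * star V * (V * C * star V)
          = V * (diagonal (RCLike.ofReal ∘ hH.eigenvalues) * (star V * V) * C) * star V := by
            noncomm_ring
        _ = V * (diagonal (RCLike.ofReal ∘ hH.eigenvalues) * C) * star V := by
            rw [h1]; noncomm_ring
        _ = V * (C * diagonal (RCLike.ofReal ∘ hH.eigenvalues)) * star V := by rw [hDC]
        _ = V * (C * (star V * V) * diagonal (RCLike.ofReal ∘ hH.eigenvalues)) * star V := by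
            rw [h1]; noncomm_ring
        _ = (V * C * star V) * (V * diagonal (RCLike.ofReal ∘ hH.eigenvalues) * star V) := by
            noncomm_ring
    · show star V * (V * C * star V) * V = C
      calc star V * (V * C * star V) * V = (star V * V) * C * (star V * V) := by noncomm_ring
        _ = C := by rw [h1]; noncomm_ring

/-- coordinates of a pattern-supported hermitian matrix -/
noncomputable def hermCoord (p : Fin n → ℝ) :
    ↥(diagSub p) →ₗ[ℝ] ({q : Fin n × Fin n // p q.1 = p q.2} → ℝ) where
  toFun B := fun q => if q.1.1 ≤ q.1.2 then ((B : M) q.1.1 q.1.2).re else ((B : M) q.1.1 q.1.2).im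
  map_add' B C := by
    funext q
    by_cases h : q.1.1 ≤ q.1.2 <;>
      simp [h, Matrix.add_apply]
  map_smul' r B := by
    funext q
    by_cases h : q.1.1 ≤ q.1.2 <;>
      simp [h, Matrix.smul_apply, Complex.real_smul]

lemma hermCoord_bijective (p : Fin n → ℝ) : Function.Bijective (hermCoord p) := by
  constructor
  · rw [injective_iff_map_eq_zero]
    intro B hB0
    have hBh : ((B : M))ᴴ = (B : M) := B.2.1
    apply Subtype.ext
    ext i j
    show (B : M) i j = 0
    by_cases hpq : p i = p j
    · have hstar : (B : M) j i = star ((B : M) i j) := by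
        conv_lhs => rw [← hBh]
        rfl
      rcases lt_trichotomy i j with hij | hij | hij
      · have e1 := congrFun hB0 ⟨(i, j), hpq⟩
        have e2 := congrFun hB0 ⟨(j, i), hpq.symm⟩
        simp only [hermCoord, LinearMap.coe_mk, AddHom.coe_mk, Pi.zero_apply] at e1 e2
        rw [if_pos (le_of_lt hij)] at e1
        rw [if_neg (not_le.mpr hij)] at e2
        rw [hstar] at e2
        apply Complex.ext
        · exact e1
        · simpa using e2
      · subst hij
        have e1 := congrFun hB0 ⟨(i, i), rfl⟩
        simp only [hermCoord, LinearMap.coe_mk, AddHom.coe_mk, Pi.zero_apply] at e1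
        rw [if_pos le_rfl] at e1
        have him : ((B : M) i i).im = 0 := by
          have := hstar
          have h2 : ((B : M) i i).im = -((B : M) i i).im := by
            conv_lhs => rw [this]
            simp
          linarith
        exact Complex.ext e1 him
      · have e1 := congrFun hB0 ⟨(j, i), hpq.symm⟩
        have e2 := congrFun hB0 ⟨(i, j), hpq⟩
        simp only [hermCoord, LinearMap.coe_mk, AddHom.coe_mk, Pi.zero_apply] at e1 e2
        rw [if_pos (le_of_lt hij)] at e1
        rw [if_neg (not_le.mpr hij)] at e2
        rw [hstar] at e1
        apply Complex.ext
        · simpa using e1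
        · exact e2
    · exact B.2.2 i j hpq
  · intro f
    set g : Fin n × Fin n → ℝ := fun q => if h : p q.1 = p q.2 then f ⟨q, h⟩ else 0 with hg
    set Bm : M := Matrix.of (fun i j =>
      if i = j then ((g (i, i) : ℝ) : ℂ)
      else if i < j then (g (i, j) : ℂ) - (g (j, i) : ℝ) * Complex.I
      else (g (j, i) : ℂ) + (g (i, j) : ℝ) * Complex.I) with hBm
    have hBmh : Bm.IsHermitian := by
      show Bmᴴ = Bm
      ext i j
      rw [conjTranspose_apply]
      rcases lt_trichotomy i j with hij | hij | hij
      · rw [show Bm j i = (g (i, j) : ℂ) + (g (j, i) : ℝ) * Complex.I from by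
          rw [hBm]; simp [Matrix.of_apply, (ne_of_lt hij).symm, not_lt.mpr (le_of_lt hij)]]
        rw [show Bm i j = (g (i, j) : ℂ) - (g (j, i) : ℝ) * Complex.I from by
          rw [hBm]; simp [Matrix.of_apply, ne_of_lt hij, hij]]
        simp [Complex.ext_iff]
      · subst hij
        rw [show Bm i i = ((g (i, i) : ℝ) : ℂ) from by rw [hBm]; simp [Matrix.of_apply]]
        simp [Complex.conj_ofReal]
      · rw [show Bm j i = (g (j, i) : ℂ) - (g (i, j) : ℝ) * Complex.I from by
          rw [hBm]; simp [Matrix.of_apply, ne_of_lt hij, hij]]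
        rw [show Bm i j = (g (j, i) : ℂ) + (g (i, j) : ℝ) * Complex.I from by
          rw [hBm]; simp [Matrix.of_apply, (ne_of_lt hij).symm, not_lt.mpr (le_of_lt hij)]]
        simp [Complex.ext_iff]
    have hBms : ∀ i j, p i ≠ p j → Bm i j = 0 := by
      intro i j hpq
      have hij : i ≠ j := fun h => hpq (h ▸ rfl)
      have hg1 : g (i, j) = 0 := by rw [hg]; exact dif_neg hpq
      have hg2 : g (j, i) = 0 := by rw [hg]; exact dif_neg (fun h => hpq h.symm)
      rcases lt_or_gt_of_ne hij with h | h
      · rw [show Bm i j = (g (i, j) : ℂ) - (g (j, i) : ℝ) * Complex.I from by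
          rw [hBm]; simp [Matrix.of_apply, hij, h]]
        rw [hg1, hg2]
        simp
      · rw [show Bm i j = (g (j, i) : ℂ) + (g (i, j) : ℝ) * Complex.I from by
          rw [hBm]; simp [Matrix.of_apply, hij, not_lt.mpr (le_of_lt h)]]
        rw [hg1, hg2]
        simp
    refine ⟨⟨Bm, hBmh, hBms⟩, ?_⟩
    funext q
    obtain ⟨⟨i, j⟩, hq⟩ := q
    simp only [hermCoord, LinearMap.coe_mk, AddHom.coe_mk]
    have hgq : g (i, j) = f ⟨(i, j), hq⟩ := by rw [hg]; exact dif_pos hq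
    rcases lt_trichotomy i j with hij | hij | hij
    · rw [if_pos (le_of_lt hij)]
      rw [show Bm i j = (g (i, j) : ℂ) - (g (j, i) : ℝ) * Complex.I from by
        rw [hBm]; simp [Matrix.of_apply, ne_of_lt hij, hij]]
      simp [hgq]
    · subst hij
      rw [if_pos le_rfl]
      rw [show Bm i i = ((g (i, i) : ℝ) : ℂ) from by rw [hBm]; simp [Matrix.of_apply]]
      simp [hgq]
    · rw [if_neg (not_le.mpr hij)]
      rw [show Bm i j = (g (j, i) : ℂ) + (g (i, j) : ℝ) * Complex.I from by
        rw [hBm]; simp [Matrix.of_apply, (ne_of_lt hij).symm, not_lt.mpr (le_of_lt hij)]]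
      simp [hgq]

lemma finrank_diagSub (p : Fin n → ℝ) :
    Module.finrank ℝ ↥(diagSub p) = Fintype.card {q : Fin n × Fin n // p q.1 = p q.2} := by
  rw [(LinearEquiv.ofBijective (hermCoord p) (hermCoord_bijective p)).finrank_eq]
  exact Module.finrank_pi ℝ

lemma card_pairs (p : Fin n → ℝ) (hp01 : ∀ i, p i = 0 ∨ p i = 1) {k : ℕ}
    (hk : (Finset.univ.filter fun i => p i ≠ 0).card = k) :
    Fintype.card {q : Fin n × Fin n // p q.1 = p q.2} = k ^ 2 + (n - k) ^ 2 := by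
  classical
  rw [Fintype.card_subtype]
  set A := Finset.univ.filter fun i => p i ≠ 0 with hA
  have hsplit : (Finset.univ.filter fun q : Fin n × Fin n => p q.1 = p q.2)
      = A ×ˢ A ∪ Aᶜ ×ˢ Aᶜ := by
    ext ⟨i, j⟩
    simp only [Finset.mem_filter, Finset.mem_univ, true_and, Finset.mem_union,
      Finset.mem_product, hA, Finset.mem_compl, not_not]
    constructor
    · intro h
      rcases hp01 i with h0 | h1
      · exact Or.inr ⟨h0, by rw [← h]; exact h0⟩
      · refine Or.inl ⟨by rw [h1]; norm_num, by rw [← h, h1]; norm_num⟩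
    · rintro (⟨hi, hj⟩ | ⟨hi, hj⟩)
      · rcases hp01 i with h0 | h1
        · exact absurd h0 hi
        · rcases hp01 j with h0' | h1'
          · exact absurd h0' hj
          · rw [h1, h1']
      · rw [hi, hj]
  rw [hsplit, Finset.card_union_of_disjoint, Finset.card_product, Finset.card_product,
    Finset.card_compl, hk, Fintype.card_fin]
  · ring
  · rw [Finset.disjoint_left]
    rintro ⟨i, j⟩ hij hij'
    rw [Finset.mem_product] at hij hij'
    exact (Finset.mem_compl.mp hij'.1) hij.1

lemma finrank_commSub {k : ℕ} {P : M} (hP : IsProjOfRank P k) :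
    Module.finrank ℝ ↥(commSub P) = k ^ 2 + (n - k) ^ 2 := by
  have hH : P.IsHermitian := hP.2.1
  rw [← LinearEquiv.finrank_map_eq (conjEquiv (hH.eigenvectorUnitary : M)
    (Matrix.mem_unitaryGroup_iff'.mp hH.eigenvectorUnitary.2)
    (Matrix.mem_unitaryGroup_iff.mp hH.eigenvectorUnitary.2)) (commSub P)]
  rw [show Submodule.map (conjEquiv (hH.eigenvectorUnitary : M)
    (Matrix.mem_unitaryGroup_iff'.mp hH.eigenvectorUnitary.2)
    (Matrix.mem_unitaryGroup_iff.mp hH.eigenvectorUnitary.2)).toLinearMap (commSub P)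
      = diagSub hH.eigenvalues from map_commSub hP hH]
  rw [finrank_diagSub]
  exact card_pairs hH.eigenvalues (proj_eigen01 hP.1 hH) (card_eigen_one hP hH)

end Stmt15

/-- for a rank-`k` orthogonal projection `P`, the real span of the Hermitian
cone `S(P) = { B ∈ H_n : tr(BP) = w_k(B) }` equals the set of Hermitian matrices that are
block diagonal with respect to `ℂⁿ = Ran P ⊕ Ker P` (i.e. Hermitian matrices commuting with
`P`), and has real dimension `k² + (n-k)²`. -/
theorem stmt_15 (n k : ℕ) (hk : 1 ≤ k) (hkn : k < n)
    (P : Matrix (Fin n) (Fin n) ℂ) (hP : IsProjOfRank P k) :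
    (Submodule.span ℝ
        {B : Matrix (Fin n) (Fin n) ℂ | B.IsHermitian ∧ (B * P).trace = (wk k B : ℂ)} :
        Set (Matrix (Fin n) (Fin n) ℂ))
      = {B : Matrix (Fin n) (Fin n) ℂ | B.IsHermitian ∧ P * B = B * P} ∧
    Module.finrank ℝ
        (Submodule.span ℝ
          {B : Matrix (Fin n) (Fin n) ℂ | B.IsHermitian ∧ (B * P).trace = (wk k B : ℂ)})
      = k ^ 2 + (n - k) ^ 2 := by
  have hspan := Stmt15.span_S_eq hk (le_of_lt hkn) hP
  constructor
  · rw [hspan]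
    rfl
  · rw [hspan]
    exact Stmt15.finrank_commSub hP
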